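/- arXiv:2406.18562 — 3 statements merged into one kernel-verified Lean document; each statement's English description precedes it below -/
import Mathlib

section
/- Consider 4 points in ℝ² given by z_{(y,a)} = ((−1)^a · m_sp, (−1)^y · m_inv) with labels y ∈ {0,1}, where 0 < m_sp < m_inv. The maximum-margin linear classifier separating the points by label y has margin m_inv, achieved by the classifier depending only on the second coordinate. Conversely, if the labels are given by a ∈ {0,1} instead, the maximum margin is m_sp. -/
open Matrix

/-- The four toy representation points z_{(y,a)} = ((−1)^a·m_sp, (−1)^y·m_inv) ∈ ℝ². -/
noncomputable def zpt (msp minv : ℝ) (p : Fin 2 × Fin 2) : Fin 2 → ℝ :=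
  ![(-1 : ℝ) ^ (p.2 : ℕ) * msp, (-1 : ℝ) ^ (p.1 : ℕ) * minv]

/-- With 0 < m_sp < m_inv, the maximum margin of a unit-normal linear classifier separating the
points by label y is m_inv, achieved by the classifier depending only on the second coordinate;
if instead the labels are a, the maximum margin is m_sp. -/
theorem stmt10 (msp minv : ℝ) (h0 : 0 < msp) (h1 : msp < minv) :
    IsGreatest {m : ℝ | ∃ (w : Fin 2 → ℝ) (b : ℝ), w 0 ^ 2 + w 1 ^ 2 = 1 ∧
        ∀ p : Fin 2 × Fin 2, m ≤ (-1 : ℝ) ^ (p.1 : ℕ) * (w ⬝ᵥ zpt msp minv p + b)} minv ∧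
    (∀ p : Fin 2 × Fin 2,
      minv ≤ (-1 : ℝ) ^ (p.1 : ℕ) * ((![0, 1] : Fin 2 → ℝ) ⬝ᵥ zpt msp minv p + 0)) ∧
    IsGreatest {m : ℝ | ∃ (w : Fin 2 → ℝ) (b : ℝ), w 0 ^ 2 + w 1 ^ 2 = 1 ∧
        ∀ p : Fin 2 × Fin 2, m ≤ (-1 : ℝ) ^ (p.2 : ℕ) * (w ⬝ᵥ zpt msp minv p + b)} msp := by
  refine ⟨⟨⟨![0, 1], 0, by norm_num, ?_⟩, ?_⟩, ?_, ⟨![1, 0], 0, by norm_num, ?_⟩, ?_⟩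
  · rintro ⟨⟨y1, hy⟩, ⟨a1, ha⟩⟩
    interval_cases y1 <;> interval_cases a1 <;>
      simp [zpt, dotProduct, Fin.sum_univ_two]
  · rintro m ⟨w, b, hw, hm⟩
    have h00 := hm ((0 : Fin 2), (0 : Fin 2))
    have h10 := hm ((1 : Fin 2), (0 : Fin 2))
    simp [zpt, dotProduct, Fin.sum_univ_two] at h00 h10
    nlinarith [sq_nonneg (w 1 - 1), sq_nonneg (w 0)]
  · rintro ⟨⟨y1, hy⟩, ⟨a1, ha⟩⟩
    interval_cases y1 <;> interval_cases a1 <;>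
      simp [zpt, dotProduct, Fin.sum_univ_two]
  · rintro ⟨⟨y1, hy⟩, ⟨a1, ha⟩⟩
    interval_cases y1 <;> interval_cases a1 <;>
      simp [zpt, dotProduct, Fin.sum_univ_two]
  · rintro m ⟨w, b, hw, hm⟩
    have h00 := hm ((0 : Fin 2), (0 : Fin 2))
    have h01 := hm ((0 : Fin 2), (1 : Fin 2))
    simp [zpt, dotProduct, Fin.sum_univ_two] at h00 h01
    nlinarith [sq_nonneg (w 0 - 1), sq_nonneg (w 1)]
end

section
/- If α > β (with ρ > α, β > γ, all the quantities α−β−γ+ρ and β−α−γ+ρ positive), then the max-margin classifier on the spectral contrastive toy representations that separates by the spurious attribute has margin √(β−α−γ+ρ), strictly less than the margin √(α−β−γ+ρ) of the classifier separating by class; hence when instead the connectivity satisfies the paper's empirical regime (spurious connectivity exceeding invariant connectivity, i.e., the roles swapped), the max-margin downstream classifier aligns with the spurious attribute. -/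
open Matrix

/-- The four toy spectral contrastive representations (±B_sp, ±B_inv) ∈ ℝ² with
B_sp = √(β−α−γ+ρ) and B_inv = √(α−β−γ+ρ). -/
noncomputable def zrep (ρ α β γ : ℝ) (p : Fin 2 × Fin 2) : Fin 2 → ℝ :=
  ![(-1 : ℝ) ^ (p.2 : ℕ) * Real.sqrt (β - α - γ + ρ),
    (-1 : ℝ) ^ (p.1 : ℕ) * Real.sqrt (α - β - γ + ρ)]

/-- If α > β (with ρ > α, β > γ and both margin arguments positive), the max-margin classifier
separating the toy representations by the spurious attribute has margin √(β−α−γ+ρ), strictly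
less than the margin √(α−β−γ+ρ) of the classifier separating by class. -/
theorem stmt11 (ρ α β γ : ℝ) (hρα : ρ > α) (hβγ : β > γ) (hαβ : α > β)
    (hpos1 : 0 < β - α - γ + ρ) (hpos2 : 0 < α - β - γ + ρ) :
    IsGreatest {m : ℝ | ∃ (w : Fin 2 → ℝ) (b : ℝ), w 0 ^ 2 + w 1 ^ 2 = 1 ∧
        ∀ p : Fin 2 × Fin 2, m ≤ (-1 : ℝ) ^ (p.2 : ℕ) * (w ⬝ᵥ zrep ρ α β γ p + b)}
      (Real.sqrt (β - α - γ + ρ)) ∧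
    IsGreatest {m : ℝ | ∃ (w : Fin 2 → ℝ) (b : ℝ), w 0 ^ 2 + w 1 ^ 2 = 1 ∧
        ∀ p : Fin 2 × Fin 2, m ≤ (-1 : ℝ) ^ (p.1 : ℕ) * (w ⬝ᵥ zrep ρ α β γ p + b)}
      (Real.sqrt (α - β - γ + ρ)) ∧
    Real.sqrt (β - α - γ + ρ) < Real.sqrt (α - β - γ + ρ) := by
  have hs1 : (0:ℝ) ≤ Real.sqrt (β - α - γ + ρ) := Real.sqrt_nonneg _
  have hs2 : (0:ℝ) ≤ Real.sqrt (α - β - γ + ρ) := Real.sqrt_nonneg _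
  refine ⟨⟨⟨![1,0], 0, by norm_num, ?_⟩, ?_⟩, ⟨⟨![0,1], 0, by norm_num, ?_⟩, ?_⟩, ?_⟩
  · rintro ⟨a, c⟩
    fin_cases a <;> fin_cases c <;>
      simp [zrep, dotProduct, Fin.sum_univ_two]
  · rintro m ⟨w, b, hw, h⟩
    have h1 := h (0, 0)
    have h2 := h (0, 1)
    simp [zrep, dotProduct, Fin.sum_univ_two] at h1 h2
    nlinarith [sq_nonneg (w 0 - 1), sq_nonneg (w 1)]
  · rintro ⟨a, c⟩
    fin_cases a <;> fin_cases c <;>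
      simp [zrep, dotProduct, Fin.sum_univ_two]
  · rintro m ⟨w, b, hw, h⟩
    have h1 := h (0, 0)
    have h2 := h (1, 0)
    simp [zrep, dotProduct, Fin.sum_univ_two] at h1 h2
    nlinarith [sq_nonneg (w 1 - 1), sq_nonneg (w 0)]
  · exact Real.sqrt_lt_sqrt hpos1.le (by linarith)
end

section
/- For k₁, k₂, k₃ ≥ 1 and scalars c₁, c₂, c₃, c₄, the matrix M = c₁·I₂⊗J₂⊗J_n + c₂·J₂⊗I₂⊗J_n + c₃·I₄⊗J_n + c₄·J₄⊗J_n (of size 4n) has spectrum contained in {0, n(c₃), n(c₃ + 2c₁), n(c₃ + 2c₂), n(c₃ + 2c₁ + 2c₂ + 4c₄)}, with 0 having multiplicity at least 4(n−1). -/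
open Matrix Kronecker

def J (k : ℕ) : Matrix (Fin k) (Fin k) ℝ := Matrix.of fun _ _ => 1

private def Mm (c₁ c₂ c₃ c₄ : ℝ) (n : ℕ) : Matrix (Fin 2 × Fin 2 × Fin n) (Fin 2 × Fin 2 × Fin n) ℝ :=
  c₁ • ((1 : Matrix (Fin 2) (Fin 2) ℝ) ⊗ₖ (J 2 ⊗ₖ J n)) +
  c₂ • (J 2 ⊗ₖ ((1 : Matrix (Fin 2) (Fin 2) ℝ) ⊗ₖ J n)) +
  c₃ • ((1 : Matrix (Fin 2) (Fin 2) ℝ) ⊗ₖ ((1 : Matrix (Fin 2) (Fin 2) ℝ) ⊗ₖ J n)) +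
  c₄ • (J 2 ⊗ₖ (J 2 ⊗ₖ J n))

private def S {n : ℕ} (x : Fin 2 × Fin 2 × Fin n → ℝ) (a b : Fin 2) : ℝ := ∑ i, x (a, b, i)

private lemma key (c₁ c₂ c₃ c₄ : ℝ) (n : ℕ) (x : Fin 2 × Fin 2 × Fin n → ℝ) (a b : Fin 2) (i : Fin n) :
    (Mm c₁ c₂ c₃ c₄ n).mulVec x (a, b, i) =
      c₁ * (S x a 0 + S x a 1) + c₂ * (S x 0 b + S x 1 b) + c₃ * S x a b +
      c₄ * (S x 0 0 + S x 0 1 + S x 1 0 + S x 1 1) := by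
  simp only [Mm, mulVec, dotProduct, Fintype.sum_prod_type, Matrix.add_apply, Matrix.smul_apply,
    Matrix.kroneckerMap_apply, Matrix.one_apply, _root_.J, Matrix.of_apply, smul_eq_mul,
    Fin.sum_univ_two, S, mul_one, one_mul, Finset.sum_add_distrib, ← Finset.mul_sum]
  fin_cases a <;> fin_cases b <;> simp [Finset.sum_add_distrib] <;> simp only [← Finset.mul_sum] <;> ring

private lemma sum_eq (c₁ c₂ c₃ c₄ μ : ℝ) (n : ℕ) (v : Fin 2 × Fin 2 × Fin n → ℝ)
    (hMv : (Mm c₁ c₂ c₃ c₄ n).mulVec v = μ • v) (a b : Fin 2) :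
    μ * S v a b = n * (c₁ * (S v a 0 + S v a 1) + c₂ * (S v 0 b + S v 1 b) + c₃ * S v a b +
      c₄ * (S v 0 0 + S v 0 1 + S v 1 0 + S v 1 1)) := by
  calc μ * S v a b = ∑ i : Fin n, μ * v (a, b, i) := by rw [S, Finset.mul_sum]
    _ = ∑ i : Fin n, (Mm c₁ c₂ c₃ c₄ n).mulVec v (a, b, i) := by
        refine Finset.sum_congr rfl fun i _ => ?_
        have := congrFun hMv (a, b, i); simp only [Pi.smul_apply, smul_eq_mul] at this
        exact this.symm
    _ = _ := by
        simp only [key]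
        rw [Finset.sum_const, Finset.card_univ, Fintype.card_fin, nsmul_eq_mul]

/-- For M = c₁·I₂⊗J₂⊗J_n + c₂·J₂⊗I₂⊗J_n + c₃·I₄⊗J_n + c₄·J₄⊗J_n (of size 4n), every
eigenvalue of M lies in {0, n·c₃, n·(c₃+2c₁), n·(c₃+2c₂), n·(c₃+2c₁+2c₂+4c₄)}, and 0 has
multiplicity at least 4(n−1). -/
theorem stmt15 (c₁ c₂ c₃ c₄ : ℝ) (n : ℕ) (hn : 1 ≤ n) :
    (∀ (μ : ℝ) (v : Fin 2 × Fin 2 × Fin n → ℝ), v ≠ 0 →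
      ((c₁ • ((1 : Matrix (Fin 2) (Fin 2) ℝ) ⊗ₖ (J 2 ⊗ₖ J n)) +
        c₂ • (J 2 ⊗ₖ ((1 : Matrix (Fin 2) (Fin 2) ℝ) ⊗ₖ J n)) +
        c₃ • ((1 : Matrix (Fin 2) (Fin 2) ℝ) ⊗ₖ ((1 : Matrix (Fin 2) (Fin 2) ℝ) ⊗ₖ J n)) +
        c₄ • (J 2 ⊗ₖ (J 2 ⊗ₖ J n))).mulVec v = μ • v) →
      μ ∈ ({0, (n : ℝ) * c₃, (n : ℝ) * (c₃ + 2 * c₁), (n : ℝ) * (c₃ + 2 * c₂),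
            (n : ℝ) * (c₃ + 2 * c₁ + 2 * c₂ + 4 * c₄)} : Set ℝ)) ∧
    4 * (n - 1) ≤ Module.finrank ℝ
      (LinearMap.ker (c₁ • ((1 : Matrix (Fin 2) (Fin 2) ℝ) ⊗ₖ (J 2 ⊗ₖ J n)) +
        c₂ • (J 2 ⊗ₖ ((1 : Matrix (Fin 2) (Fin 2) ℝ) ⊗ₖ J n)) +
        c₃ • ((1 : Matrix (Fin 2) (Fin 2) ℝ) ⊗ₖ ((1 : Matrix (Fin 2) (Fin 2) ℝ) ⊗ₖ J n)) +
        c₄ • (J 2 ⊗ₖ (J 2 ⊗ₖ J n))).mulVecLin) := by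
  haveI : NeZero n := ⟨Nat.one_le_iff_ne_zero.mp hn⟩
  constructor
  · intro μ v hv hMv
    change (Mm c₁ c₂ c₃ c₄ n).mulVec v = μ • v at hMv
    have E00 := sum_eq c₁ c₂ c₃ c₄ μ n v hMv 0 0
    have E01 := sum_eq c₁ c₂ c₃ c₄ μ n v hMv 0 1
    have E10 := sum_eq c₁ c₂ c₃ c₄ μ n v hMv 1 0
    have E11 := sum_eq c₁ c₂ c₃ c₄ μ n v hMv 1 1
    by_cases hP : S v 0 0 + S v 0 1 + S v 1 0 + S v 1 1 = 0
    · by_cases hQ : S v 0 0 + S v 0 1 - S v 1 0 - S v 1 1 = 0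
      · by_cases hR : S v 0 0 - S v 0 1 + S v 1 0 - S v 1 1 = 0
        · by_cases hU : S v 0 0 - S v 0 1 - S v 1 0 + S v 1 1 = 0
          · -- all S zero, μ = 0
            have h00 : S v 0 0 = 0 := by linarith
            have h01 : S v 0 1 = 0 := by linarith
            have h10 : S v 1 0 = 0 := by linarith
            have h11 : S v 1 1 = 0 := by linarith
            obtain ⟨p, hp⟩ := Function.ne_iff.mp hv
            obtain ⟨a, b, i⟩ := p
            have := congrFun hMv (a, b, i)
            rw [key] at this
            have hab : S v a b = 0 := by fin_cases a <;> fin_cases b <;> assumption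
            have ha0 : S v a 0 = 0 := by fin_cases a <;> assumption
            have ha1 : S v a 1 = 0 := by fin_cases a <;> assumption
            have hb0 : S v 0 b = 0 := by fin_cases b <;> assumption
            have hb1 : S v 1 b = 0 := by fin_cases b <;> assumption
            rw [ha0, ha1, hb0, hb1, hab, h00, h01, h10, h11] at this
            simp only [Pi.smul_apply, smul_eq_mul] at this hp
            have hμ : μ = 0 := by
              have : μ * v (a, b, i) = 0 := by linarith
              rcases mul_eq_zero.mp this with h | h
              · exact h
              · exact absurd h (by simpa using hp)
            left; exact hμ
          · -- μ = n c₃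
            have h : (μ - (n : ℝ) * c₃) * (S v 0 0 - S v 0 1 - S v 1 0 + S v 1 1) = 0 := by
              linear_combination E00 - E01 - E10 + E11
            right; left
            rcases mul_eq_zero.mp h with h | h
            · linarith
            · exact absurd h hU
        · have h : (μ - (n : ℝ) * (c₃ + 2 * c₂)) * (S v 0 0 - S v 0 1 + S v 1 0 - S v 1 1) = 0 := by
            linear_combination E00 - E01 + E10 - E11
          right; right; right; left
          rcases mul_eq_zero.mp h with h | h
          · linarith
          · exact absurd h hR
      · have h : (μ - (n : ℝ) * (c₃ + 2 * c₁)) * (S v 0 0 + S v 0 1 - S v 1 0 - S v 1 1) = 0 := by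
          linear_combination E00 + E01 - E10 - E11
        right; right; left
        rcases mul_eq_zero.mp h with h | h
        · linarith
        · exact absurd h hQ
    · have h : (μ - (n : ℝ) * (c₃ + 2 * c₁ + 2 * c₂ + 4 * c₄)) * (S v 0 0 + S v 0 1 + S v 1 0 + S v 1 1) = 0 := by
        linear_combination E00 + E01 + E10 + E11
      right; right; right; right
      rcases mul_eq_zero.mp h with h | h
      · simp only [Set.mem_singleton_iff]; linarith
      · exact absurd h hP
  · -- kernel dimension
    set M := (c₁ • ((1 : Matrix (Fin 2) (Fin 2) ℝ) ⊗ₖ (J 2 ⊗ₖ J n)) +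
        c₂ • (J 2 ⊗ₖ ((1 : Matrix (Fin 2) (Fin 2) ℝ) ⊗ₖ J n)) +
        c₃ • ((1 : Matrix (Fin 2) (Fin 2) ℝ) ⊗ₖ ((1 : Matrix (Fin 2) (Fin 2) ℝ) ⊗ₖ J n)) +
        c₄ • (J 2 ⊗ₖ (J 2 ⊗ₖ J n))) with hM
    have hMM : M = Mm c₁ c₂ c₃ c₄ n := rfl
    set u : Fin 2 × Fin 2 × {j : Fin n // j ≠ 0} → (Fin 2 × Fin 2 × Fin n → ℝ) :=
      fun idx q => (if q = (idx.1, idx.2.1, idx.2.2.val) then 1 else 0) -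
        (if q = (idx.1, idx.2.1, (0 : Fin n)) then 1 else 0) with hu
    have hS : ∀ idx a b, S (u idx) a b = 0 := by
      rintro ⟨a', b', j, hj⟩ a b
      simp only [S, hu, Prod.mk.injEq]
      rw [Finset.sum_sub_distrib]
      by_cases hab : a = a' ∧ b = b'
      · simp [hab.1, hab.2, Finset.sum_ite_eq']
      · rw [not_and_or] at hab
        rcases hab with h | h <;> simp [h]
    have hker : ∀ idx, u idx ∈ LinearMap.ker M.mulVecLin := by
      intro idx
      rw [LinearMap.mem_ker, mulVecLin_apply]
      funext p
      obtain ⟨a, b, i⟩ := p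
      rw [hMM, key]
      simp [hS]
    have hli : LinearIndependent ℝ u := by
      rw [Fintype.linearIndependent_iff]
      intro g hg
      rintro ⟨a, b, i, hi⟩
      have := congrFun hg (a, b, i)
      simp only [Finset.sum_apply, Pi.smul_apply, smul_eq_mul, Pi.zero_apply] at this
      have h2 : ∀ idx' : Fin 2 × Fin 2 × {j : Fin n // j ≠ 0},
          u idx' (a, b, i) = if idx' = (a, b, ⟨i, hi⟩) then 1 else 0 := by
        rintro ⟨a', b', j', hj'⟩
        simp only [hu, Prod.mk.injEq, Subtype.mk.injEq]
        have : ¬(a = a' ∧ b = b' ∧ i = 0) := fun h => hi h.2.2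
        rw [if_neg this, sub_zero]
        congr 1
        simp only [eq_iff_iff]
        constructor <;> rintro ⟨h1, h2, h3⟩ <;> exact ⟨h1.symm, h2.symm, h3.symm⟩
      rw [Finset.sum_congr rfl fun idx' _ => by rw [h2 idx']] at this
      simpa [Finset.sum_ite_eq'] using this
    have hli2 : LinearIndependent ℝ (fun idx => (⟨u idx, hker idx⟩ :
        LinearMap.ker M.mulVecLin)) := by
      apply LinearIndependent.of_comp (LinearMap.ker M.mulVecLin).subtype
      exact hli
    have hcard := hli2.fintype_card_le_finrank
    have : Fintype.card (Fin 2 × Fin 2 × {j : Fin n // j ≠ 0}) = 4 * (n - 1) := by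
      simp only [Fintype.card_prod, Fintype.card_fin]
      have : Fintype.card {j : Fin n // j ≠ 0} = n - 1 := by
        rw [Fintype.card_subtype_compl, Fintype.card_fin, Fintype.card_subtype_eq]
      rw [this]; ring
    omega
end
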